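/- Let P = p1→p2→⋯→p_ℓ be a forward-induced directed path in an oriented graph D, let (F_1,…,F_ℓ) and (L_1,…,L_ℓ) be the partitions of N(P) by first and last attachment on P. If D is A⃗4-free, then for all 2 ≤ i < j ≤ ℓ−1 there is no arc from F_i^+ to F_j and no arc from L_i to L_j^-. -/
import Mathlib


namespace DichiP4

variable {V : Type*}

/-- An oriented graph: an arc relation with no digons (hence also no loops). -/
def Oriented (A : V → V → Prop) : Prop := ∀ u v, A u v → ¬ A v u

/-- Adjacency in the underlying (undirected) graph. -/
def Adj (A : V → V → Prop) (u v : V) : Prop := A u v ∨ A v u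

/-- The neighborhood `N(v)` of a vertex in the underlying graph. -/
def nbr (A : V → V → Prop) (v : V) : Set V := {w | Adj A v w}

/-- `N(S)`: the neighborhood of a set of vertices. -/
def nbrSet (A : V → V → Prop) (S : Set V) : Set V := (⋃ v ∈ S, nbr A v) \ S

/-- `N[S]`: the closed neighborhood of a set of vertices. -/
def cnbrSet (A : V → V → Prop) (S : Set V) : Set V := ⋃ v ∈ S, insert v (nbr A v)

/-- A clique in the underlying graph (= the vertex set of a tournament). -/
def IsClique (A : V → V → Prop) (K : Set V) : Prop :=
  ∀ u ∈ K, ∀ v ∈ K, u ≠ v → Adj A u v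

/-- The clique number `ω(D)` of the underlying graph. -/
noncomputable def cliqueNum (A : V → V → Prop) : ℕ :=
  sSup {n | ∃ K : Set V, IsClique A K ∧ K.Finite ∧ K.ncard = n}

/-- The set `s` induces an acyclic subdigraph (no directed cycle within `s`). -/
def AcyclicOn (A : V → V → Prop) (s : Set V) : Prop :=
  ∀ v, ¬ Relation.TransGen (fun x y => x ∈ s ∧ y ∈ s ∧ A x y) v v

/-- The set `s` admits a dicoloring with `k` colors: every color class induces an
acyclic subdigraph. -/
def DicolorableOn (A : V → V → Prop) (s : Set V) (k : ℕ) : Prop :=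
  ∃ c : V → ℕ, (∀ v ∈ s, c v < k) ∧ ∀ i : ℕ, AcyclicOn A {v | v ∈ s ∧ c v = i}

/-- The dichromatic number `χ⃗(s)` of the subdigraph induced by `s`. -/
noncomputable def dichi (A : V → V → Prop) (s : Set V) : ℕ :=
  sInf {k | DicolorableOn A s k}

/-- `A` has an induced subdigraph isomorphic to `B`. -/
def HasInducedCopy {W : Type*} (A : V → V → Prop) (B : W → W → Prop) : Prop :=
  ∃ f : W → V, Function.Injective f ∧ ∀ x y : W, B x y ↔ A (f x) (f y)

/-- `A` is `B`-free: no induced subdigraph of `A` is isomorphic to `B`. -/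
def Free {W : Type*} (A : V → V → Prop) (B : W → W → Prop) : Prop :=
  ¬ HasInducedCopy A B

/-- `P⃗4`: the orientation of the path `0 – 1 – 2 – 3` with arcs `0→1, 1→2, 2→3`. -/
def P4vec : Fin 4 → Fin 4 → Prop := fun x y =>
  (x = 0 ∧ y = 1) ∨ (x = 1 ∧ y = 2) ∨ (x = 2 ∧ y = 3)

/-- `A⃗4`: the orientation of the path `0 – 1 – 2 – 3` with arcs `1→0, 1→2, 3→2`. -/
def A4vec : Fin 4 → Fin 4 → Prop := fun x y =>
  (x = 1 ∧ y = 0) ∨ (x = 1 ∧ y = 2) ∨ (x = 3 ∧ y = 2)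

/-- `Q⃗4`: the orientation of the path `0 – 1 – 2 – 3` with arcs `0→1, 2→1, 3→2`. -/
def Q4vec : Fin 4 → Fin 4 → Prop := fun x y =>
  (x = 0 ∧ y = 1) ∨ (x = 2 ∧ y = 1) ∨ (x = 3 ∧ y = 2)

/-- `Q⃗4'`: the orientation of the path `0 – 1 – 2 – 3` with arcs `1→0, 2→1, 2→3`. -/
def Q4'vec : Fin 4 → Fin 4 → Prop := fun x y =>
  (x = 1 ∧ y = 0) ∨ (x = 2 ∧ y = 1) ∨ (x = 2 ∧ y = 3)

/-- `B` is an orientation of the path on four vertices `0 – 1 – 2 – 3`. -/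
def IsP4Orientation (B : Fin 4 → Fin 4 → Prop) : Prop :=
  Oriented B ∧ ∀ x y : Fin 4, Adj B x y ↔ ((x : ℕ) + 1 = (y : ℕ) ∨ (y : ℕ) + 1 = (x : ℕ))

/-- `p 1 → p 2 → ⋯ → p ℓ` is a directed path in `A` (distinct vertices). -/
def IsDirPath (A : V → V → Prop) (ℓ : ℕ) (p : ℕ → V) : Prop :=
  1 ≤ ℓ ∧ Set.InjOn p (Set.Icc 1 ℓ) ∧ ∀ i, 1 ≤ i → i < ℓ → A (p i) (p (i + 1))

/-- A directed path `p 1 → ⋯ → p ℓ` is forward-induced: no arc `(p i, p j)` with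
`j > i + 1`. -/
def ForwardInduced (A : V → V → Prop) (ℓ : ℕ) (p : ℕ → V) : Prop :=
  ∀ i j, 1 ≤ i → j ≤ ℓ → i + 1 < j → ¬ A (p i) (p j)

/-- `p 1 → ⋯ → p ℓ` is a shortest directed path from `p 1` to `p ℓ`. -/
def IsShortestDirPath (A : V → V → Prop) (ℓ : ℕ) (p : ℕ → V) : Prop :=
  IsDirPath A ℓ p ∧
    ∀ (m : ℕ) (q : ℕ → V), IsDirPath A m q → q 1 = p 1 → q m = p ℓ → ℓ ≤ m

/-- The vertex set `V(P)` of the path `p 1, …, p ℓ`. -/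
def pathSet (ℓ : ℕ) (p : ℕ → V) : Set V := p '' Set.Icc 1 ℓ

/-- `N(P)`: the neighborhood of the vertex set of the path. -/
def pathNbrs (A : V → V → Prop) (ℓ : ℕ) (p : ℕ → V) : Set V := nbrSet A (pathSet ℓ p)

/-- `F i`: vertices of `N(P)` whose first neighbor on the path is `p i`. -/
def Fatt (A : V → V → Prop) (ℓ : ℕ) (p : ℕ → V) (i : ℕ) : Set V :=
  {v ∈ pathNbrs A ℓ p | Adj A v (p i) ∧ ∀ i', 1 ≤ i' → i' < i → ¬ Adj A v (p i')}

/-- `L j`: vertices of `N(P)` whose last neighbor on the path is `p j`. -/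
def Latt (A : V → V → Prop) (ℓ : ℕ) (p : ℕ → V) (j : ℕ) : Set V :=
  {v ∈ pathNbrs A ℓ p | Adj A v (p j) ∧ ∀ j', j < j' → j' ≤ ℓ → ¬ Adj A v (p j')}

/-- `F i ⁺`: in-neighbors of `p i` in `F i`. -/
def FattP (A : V → V → Prop) (ℓ : ℕ) (p : ℕ → V) (i : ℕ) : Set V :=
  {v ∈ Fatt A ℓ p i | A v (p i)}

/-- `F i ⁻`: out-neighbors of `p i` in `F i`. -/
def FattM (A : V → V → Prop) (ℓ : ℕ) (p : ℕ → V) (i : ℕ) : Set V :=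
  {v ∈ Fatt A ℓ p i | A (p i) v}

/-- `L j ⁺`: in-neighbors of `p j` in `L j`. -/
def LattP (A : V → V → Prop) (ℓ : ℕ) (p : ℕ → V) (j : ℕ) : Set V :=
  {v ∈ Latt A ℓ p j | A v (p j)}

/-- `L j ⁻`: out-neighbors of `p j` in `L j`. -/
def LattM (A : V → V → Prop) (ℓ : ℕ) (p : ℕ → V) (j : ℕ) : Set V :=
  {v ∈ Latt A ℓ p j | A (p j) v}

/-- `W^p = (F₂⁻ ∪ ⋯ ∪ F_{ℓ-1}⁻) ∪ (L₂⁺ ∪ ⋯ ∪ L_{ℓ-1}⁺)`. -/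
def Wp (A : V → V → Prop) (ℓ : ℕ) (p : ℕ → V) : Set V :=
  (⋃ i ∈ Set.Icc 2 (ℓ - 1), FattM A ℓ p i) ∪ ⋃ i ∈ Set.Icc 2 (ℓ - 1), LattP A ℓ p i

/-- `W^a = (F₂⁺ ∪ ⋯ ∪ F_{ℓ-1}⁺) ∪ (L₂⁻ ∪ ⋯ ∪ L_{ℓ-1}⁻)`. -/
def Wa (A : V → V → Prop) (ℓ : ℕ) (p : ℕ → V) : Set V :=
  (⋃ i ∈ Set.Icc 2 (ℓ - 1), FattP A ℓ p i) ∪ ⋃ i ∈ Set.Icc 2 (ℓ - 1), LattM A ℓ p i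

/-- `R^p = N(P) \ (N({p1, p2, pℓ}) ∪ W^p)`. -/
def Rp (A : V → V → Prop) (ℓ : ℕ) (p : ℕ → V) : Set V :=
  pathNbrs A ℓ p \ (nbrSet A {p 1, p 2, p ℓ} ∪ Wp A ℓ p)

/-- `R^a = N(P) \ (N({p1, pℓ}) ∪ W^a)`. -/
def Ra (A : V → V → Prop) (ℓ : ℕ) (p : ℕ → V) : Set V :=
  pathNbrs A ℓ p \ (nbrSet A {p 1, p ℓ} ∪ Wa A ℓ p)

/-- A dipolar set: a nonempty set `S` partitioned into `S⁺` (no out-neighbor outside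
`S`) and `S⁻` (no in-neighbor outside `S`). -/
def IsDipolar (A : V → V → Prop) (S : Set V) : Prop :=
  S.Nonempty ∧ ∃ Sp Sm : Set V, Sp ∪ Sm = S ∧ Disjoint Sp Sm ∧
    (∀ v ∈ Sp, ∀ w, w ∉ S → ¬ A v w) ∧ ∀ v ∈ Sm, ∀ w, w ∉ S → ¬ A w v

/-- Reachability by a directed path staying inside `s`. -/
def ReachIn (A : V → V → Prop) (s : Set V) (u v : V) : Prop :=
  Relation.ReflTransGen (fun x y => x ∈ s ∧ y ∈ s ∧ A x y) u v

/-- A digraph is strongly connected. -/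
def StronglyConnected (A : V → V → Prop) : Prop :=
  ∀ u v : V, Relation.ReflTransGen A u v

/-- `t` is a strongly connected component of the subdigraph induced by `s`. -/
def IsSCCOf (A : V → V → Prop) (s t : Set V) : Prop :=
  t ⊆ s ∧ t.Nonempty ∧ (∀ u ∈ t, ∀ v ∈ t, ReachIn A s u v) ∧
    ∀ u ∈ t, ∀ v ∈ s, ReachIn A s u v → ReachIn A s v u → v ∈ t

/-- A source strongly connected component: all arcs between it and the rest of `s`
begin in it. -/
def IsSourceSCC (A : V → V → Prop) (s t : Set V) : Prop :=
  IsSCCOf A s t ∧ ∀ u ∈ s, ∀ v ∈ t, A u v → u ∈ t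

/-- A sink strongly connected component: all arcs between it and the rest of `s`
end in it. -/
def IsSinkSCC (A : V → V → Prop) (s t : Set V) : Prop :=
  IsSCCOf A s t ∧ ∀ u ∈ t, ∀ v ∈ s, A u v → v ∈ t

/-- `K` (a tournament of maximum order) and the directed path `p 1 → ⋯ → p ℓ`
(from a source SCC of `D[K]` to a sink SCC of `D[K]`) form a closed tournament
`C = K ∪ V(P)`. -/
def FormsClosedTournament (A : V → V → Prop) (K : Set V) (ℓ : ℕ) (p : ℕ → V) : Prop :=
  IsClique A K ∧ K.Finite ∧ K.ncard = cliqueNum A ∧ IsDirPath A ℓ p ∧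
    (∃ t, IsSourceSCC A K t ∧ p 1 ∈ t) ∧ ∃ t, IsSinkSCC A K t ∧ p ℓ ∈ t

/-- `K` and `P` form a path-minimizing closed tournament: `|P|` is minimum among
all pairs forming a closed tournament. -/
def FormsPathMinClosedTournament (A : V → V → Prop) (K : Set V) (ℓ : ℕ) (p : ℕ → V) :
    Prop :=
  FormsClosedTournament A K ℓ p ∧
    ∀ (K' : Set V) (ℓ' : ℕ) (p' : ℕ → V), FormsClosedTournament A K' ℓ' p' → ℓ ≤ ℓ'

/-- The strong neighborhood of `S`: neighbors of `S` having both an in-neighbor and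
an out-neighbor in `S`. -/
def strongNbrs (A : V → V → Prop) (S : Set V) : Set V :=
  {v ∈ nbrSet A S | (∃ u ∈ S, A u v) ∧ ∃ u ∈ S, A v u}

/-- Build an induced copy of `A⃗4` from four distinct vertices with the right
arcs and non-adjacencies. -/
lemma mk_A4_copy {V : Type*} (A : V → V → Prop) (hA : Oriented A)
    (a b c d : V) (hac : a ≠ c) (had : a ≠ d) (hbd : b ≠ d)
    (h10 : A b a) (h12 : A b c) (h32 : A d c)
    (nac : ¬ A a c) (nca : ¬ A c a) (nad : ¬ A a d) (nda : ¬ A d a)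
    (nbd : ¬ A b d) (ndb : ¬ A d b) : HasInducedCopy A A4vec := by
  have hab : a ≠ b := fun h => hA b a h10 (h ▸ h10)
  have hbc : b ≠ c := fun h => hA b c h12 (h ▸ h12)
  have hcd : c ≠ d := fun h => hA d c h32 (h ▸ h32)
  have ncd : ¬ A c d := hA d c h32
  have nab : ¬ A a b := hA b a h10
  have ncb : ¬ A c b := hA b c h12
  have nloop : ∀ x, ¬ A x x := fun x h => hA x x h h
  refine ⟨![a, b, c, d], ?_, ?_⟩
  · intro x y hxy
    fin_cases x <;> fin_cases y <;> simp_all <;>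
      first
        | rfl
        | (exact absurd hxy.symm (by assumption))
        | (exact absurd hxy (by assumption))
        | (exact absurd hxy (Ne.symm (by assumption)))
        | (exact absurd hxy.symm (Ne.symm (by assumption)))
  · have tac : ∀ x y : V, ¬ A x y → ∀ q : Prop, ¬ q → (q ↔ A x y) :=
      fun x y hxy q hq => iff_of_false hq hxy
    intro x y
    fin_cases x <;> fin_cases y <;>
      simp only [A4vec, Matrix.cons_val_zero, Matrix.cons_val_one, Matrix.head_cons,
        Matrix.cons_val_two, Matrix.tail_cons, Matrix.cons_val_three] <;>
      first
        | (exact iff_of_true (by decide) (by assumption))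
        | (exact iff_of_false (by decide)
            (by first
              | exact nloop _
              | assumption))

/-- in an `A⃗4`-free oriented graph, for a forward-induced directed
path `p 1 → ⋯ → p ℓ` and `2 ≤ i < j ≤ ℓ - 1`, there is no arc from `F i ⁺` to
`F j` and no arc from `L i` to `L j ⁻`. -/

theorem A4free_forbidden_arcs {V : Type*}
    (A : V → V → Prop) (hA : Oriented A) (hfree : Free A A4vec)
    (ℓ : ℕ) (p : ℕ → V) (hp : IsDirPath A ℓ p) (hfi : ForwardInduced A ℓ p)
    (i j : ℕ) (h2i : 2 ≤ i) (hij : i < j) (hj : j ≤ ℓ - 1) :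
    (∀ v ∈ FattP A ℓ p i, ∀ w ∈ Fatt A ℓ p j, ¬ A v w) ∧
      ∀ v ∈ Latt A ℓ p i, ∀ w ∈ LattM A ℓ p j, ¬ A v w := by
  obtain ⟨hℓ1, hinj, harc⟩ := hp
  have hℓ : 4 ≤ ℓ := by omega
  have hmem : ∀ k, 1 ≤ k → k ≤ ℓ → p k ∈ pathSet ℓ p :=
    fun k h1 h2 => ⟨k, ⟨h1, h2⟩, rfl⟩
  constructor
  · rintro v ⟨⟨hvN, hvadj, hvfirst⟩, hvpi⟩ w ⟨hwN, hwadj, hwfirst⟩ havw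
    have hvoff : v ∉ pathSet ℓ p := hvN.2
    have hwoff : w ∉ pathSet ℓ p := hwN.2
    have harc' : A (p (i - 1)) (p i) := by
      have := harc (i - 1) (by omega) (by omega)
      have h : i - 1 + 1 = i := by omega
      rwa [h] at this
    have nwi : ¬ Adj A w (p i) := hwfirst i (by omega) (by omega)
    have nwi1 : ¬ Adj A w (p (i - 1)) := hwfirst (i - 1) (by omega) (by omega)
    have nvi1 : ¬ Adj A v (p (i - 1)) := hvfirst (i - 1) (by omega) (by omega)
    exact hfree (mk_A4_copy A hA w v (p i) (p (i - 1))
      (fun h => hwoff (h ▸ hmem i (by omega) (by omega)))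
      (fun h => hwoff (h ▸ hmem (i - 1) (by omega) (by omega)))
      (fun h => hvoff (h ▸ hmem (i - 1) (by omega) (by omega)))
      havw hvpi harc'
      (fun h => nwi (Or.inl h)) (fun h => nwi (Or.inr h))
      (fun h => nwi1 (Or.inl h)) (fun h => nwi1 (Or.inr h))
      (fun h => nvi1 (Or.inl h)) (fun h => nvi1 (Or.inr h)))
  · rintro v ⟨hvN, hvadj, hvlast⟩ w ⟨⟨hwN, hwadj, hwlast⟩, hwpj⟩ havw
    have hvoff : v ∉ pathSet ℓ p := hvN.2
    have hwoff : w ∉ pathSet ℓ p := hwN.2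
    have harc' : A (p j) (p (j + 1)) := harc j (by omega) (by omega)
    have nw1 : ¬ Adj A w (p (j + 1)) := hwlast (j + 1) (by omega) (by omega)
    have nv1 : ¬ Adj A v (p (j + 1)) := hvlast (j + 1) (by omega) (by omega)
    have nvj : ¬ Adj A v (p j) := hvlast j (by omega) (by omega)
    exact hfree (mk_A4_copy A hA (p (j + 1)) (p j) w v
      (fun h => hwoff (h ▸ hmem (j + 1) (by omega) (by omega)))
      (fun h => hvoff (h ▸ hmem (j + 1) (by omega) (by omega)))
      (fun h => hvoff (h ▸ hmem j (by omega) (by omega)))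
      harc' hwpj havw
      (fun h => nw1 (Or.inr h)) (fun h => nw1 (Or.inl h))
      (fun h => nv1 (Or.inr h)) (fun h => nv1 (Or.inl h))
      (fun h => nvj (Or.inr h)) (fun h => nvj (Or.inl h)))


end DichiP4
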